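/- The partial Jucys-Murphy elements ξ_1, …, ξ_n pairwise commute, where ξ_i = Σ_{j<i} ((j i), {j,i}) in the algebra of partial permutations B_n. -/

import Mathlib

abbrev PPn (n : ℕ) : Type := {p : Equiv.Perm (Fin n) × Finset (Fin n) // ∀ x ∉ p.2, p.1 x = x}

instance (n : ℕ) : Monoid (PPn n) where
  mul p q := ⟨(p.1.1 * q.1.1, p.1.2 ∪ q.1.2), by
    intro x hx
    simp only [Finset.mem_union, not_or] at hx
    simp [Equiv.Perm.mul_apply, q.2 x hx.2, p.2 x hx.1]⟩
  one := ⟨(1, ∅), fun x _ => rfl⟩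
  mul_assoc p q r := Subtype.ext (Prod.ext (mul_assoc _ _ _) (Finset.union_assoc _ _ _))
  one_mul p := Subtype.ext (Prod.ext (one_mul _) (Finset.empty_union _))
  mul_one p := Subtype.ext (Prod.ext (mul_one _) (Finset.union_empty _))

abbrev Bn (n : ℕ) : Type := MonoidAlgebra ℚ (PPn n)

def ppSwap {n : ℕ} (j i : Fin n) : PPn n := ⟨(Equiv.swap j i, {j, i}), by
  intro x hx
  simp only [Finset.mem_insert, Finset.mem_singleton, not_or] at hx
  exact Equiv.swap_apply_of_ne_of_ne hx.1 hx.2⟩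

noncomputable def xi (n : ℕ) (i : Fin n) : Bn n :=
  ∑ j ∈ Finset.univ.filter (· < i), MonoidAlgebra.of ℚ (PPn n) (ppSwap j i)

lemma sw1 {α} [DecidableEq α] {a b c : α} (hab : a ≠ b) (hac : a ≠ c) (hbc : b ≠ c) :
    Equiv.swap a b * Equiv.swap a c = Equiv.swap b c * Equiv.swap a b := by
  ext x
  by_cases h1 : x = a <;> by_cases h2 : x = b <;> by_cases h3 : x = c <;>
    simp_all [Equiv.swap_apply_def] <;> split_ifs <;> simp_all

lemma sw2 {α} [DecidableEq α] {a b c : α} (hab : a ≠ b) (hac : a ≠ c) (hbc : b ≠ c) :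
    Equiv.swap a b * Equiv.swap b c = Equiv.swap a c * Equiv.swap a b := by
  have h := sw1 (Ne.symm hab) hbc hac
  rwa [Equiv.swap_comm b a] at h

lemma sw3 {α} [DecidableEq α] {a b c d : α} (h1 : a ≠ c) (h2 : a ≠ d) (h3 : b ≠ c) (h4 : b ≠ d) :
    Equiv.swap a b * Equiv.swap c d = Equiv.swap c d * Equiv.swap a b := by
  ext x
  by_cases e1 : x = a <;> by_cases e2 : x = b <;> by_cases e3 : x = c <;> by_cases e4 : x = d <;>
    simp_all [Equiv.swap_apply_def] <;> split_ifs <;> simp_all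

lemma ppMul {n : ℕ} (a b c d : Fin n) :
    ppSwap a b * ppSwap c d =
      ⟨(Equiv.swap a b * Equiv.swap c d, ({a, b} : Finset (Fin n)) ∪ {c, d}), by
        intro x hx
        simp only [Finset.mem_union, Finset.mem_insert, Finset.mem_singleton, not_or] at hx
        simp [Equiv.Perm.mul_apply, Equiv.swap_apply_of_ne_of_ne hx.2.1 hx.2.2,
          Equiv.swap_apply_of_ne_of_ne hx.1.1 hx.1.2]⟩ := rfl

lemma key (n : ℕ) (i k : Fin n) (hik : i < k) : xi n i * xi n k = xi n k * xi n i := by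
  unfold xi
  rw [Finset.sum_mul_sum, Finset.sum_mul_sum, ← Finset.sum_product', ← Finset.sum_product']
  refine Finset.sum_nbij'
    (i := fun p => if p.2 = p.1 then (i, p.1) else if p.2 = i then (p.1, p.1) else (p.2, p.1))
    (j := fun q => if q.1 = i then (q.2, q.2) else if q.1 = q.2 then (q.2, i) else (q.2, q.1))
    ?_ ?_ ?_ ?_ ?_
  · rintro ⟨j, l⟩ hm
    simp only [Finset.mem_product, Finset.mem_filter, Finset.mem_univ, true_and] at hm ⊢
    obtain ⟨hj, hl⟩ := hm
    split_ifs <;> simp_all <;> omega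
  · rintro ⟨l, j⟩ hm
    simp only [Finset.mem_product, Finset.mem_filter, Finset.mem_univ, true_and] at hm ⊢
    obtain ⟨hl, hj⟩ := hm
    split_ifs <;> simp_all <;> omega
  · rintro ⟨j, l⟩ hm
    simp only [Finset.mem_product, Finset.mem_filter, Finset.mem_univ, true_and] at hm
    obtain ⟨hj, hl⟩ := hm
    by_cases h1 : l = j <;> by_cases h2 : l = i <;>
      simp_all <;> split_ifs <;> simp_all <;> omega
  · rintro ⟨l, j⟩ hm
    simp only [Finset.mem_product, Finset.mem_filter, Finset.mem_univ, true_and] at hm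
    obtain ⟨hl, hj⟩ := hm
    by_cases h1 : l = i <;> by_cases h2 : l = j <;>
      simp_all <;> split_ifs <;> simp_all <;> omega
  · rintro ⟨j, l⟩ hm
    simp only [Finset.mem_product, Finset.mem_filter, Finset.mem_univ, true_and] at hm
    obtain ⟨hj, hl⟩ := hm
    have hji : j ≠ i := ne_of_lt hj
    have hjk : j ≠ k := ne_of_lt (hj.trans hik)
    have hikn : i ≠ k := ne_of_lt hik
    have hlk : l ≠ k := ne_of_lt hl
    rw [← map_mul, ← map_mul]
    by_cases h1 : l = j
    · subst h1
      simp only [if_pos rfl]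
      congr 1
      rw [ppMul, ppMul]
      refine Subtype.ext (Prod.ext ?_ ?_)
      · exact sw1 hji hjk hikn
      · simp only
        ext x
        simp only [Finset.mem_union, Finset.mem_insert, Finset.mem_singleton]
        tauto
    · by_cases h2 : l = i
      · subst h2
        simp only [if_neg h1, if_pos rfl]
        congr 1
        rw [ppMul, ppMul]
        refine Subtype.ext (Prod.ext ?_ ?_)
        · exact sw2 hji hjk hikn
        · simp only
          ext x
          simp only [Finset.mem_union, Finset.mem_insert, Finset.mem_singleton]
          tauto
      · simp only [if_neg h1, if_neg h2]
        congr 1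
        rw [ppMul, ppMul]
        refine Subtype.ext (Prod.ext ?_ ?_)
        · exact sw3 (fun h => h1 h.symm) hjk (fun h => h2 h.symm) hikn
        · simp only
          ext x
          simp only [Finset.mem_union, Finset.mem_insert, Finset.mem_singleton]
          tauto

theorem partial_JM_commute (n : ℕ) (i k : Fin n) : xi n i * xi n k = xi n k * xi n i := by
  rcases lt_trichotomy i k with h | h | h
  · exact key n i k h
  · rw [h]
  · exact (key n k i h).symm
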